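/- Let k ≥ 2 and consider, for each n ≥ 2, a square sub-perfect map of side N_n ≥ n·(M(k^n, n) − max(1, n−3)) for pattern shape (n,n) over an alphabet of size k². Then N_n² / (k²)^(n²) → 1 as n → ∞; i.e., these maps form a family of almost perfect maps. -/

import Mathlib

open Finset Filter

/-- `A` is a cyclic `M × N` array in which every `(m,n)`-pattern occurs at most once. -/
def IsSubPerfectMap (M N m n : ℕ) {α : Type*} (A : ZMod M → ZMod N → α) : Prop :=
  ∀ p q : ZMod M × ZMod N,
    (∀ (a : Fin m) (b : Fin n),
        A (p.1 + (a : ℕ)) (p.2 + (b : ℕ)) = A (q.1 + (a : ℕ)) (q.2 + (b : ℕ))) → p = q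

/-- Let `k ≥ 2` and, for each `n ≥ 2`, let a square `(N n, N n; n, n)_{k²}`-sub-perfect map
be given whose side satisfies `N n ≥ n·(M(k^n,n) − max 1 (n−3))`, with `M` the necklace
polynomial.  Then `(N n)² / (k²)^(n²) → 1` as `n → ∞`: the maps form a family of almost
perfect maps. -/
lemma upper_aux (k : ℕ) {M n : ℕ} (A : ZMod M → ZMod M → Fin (k^2))
    (h : IsSubPerfectMap M M n n A) : M * M ≤ (k^2)^(n*n) := by
  set φ : ZMod M × ZMod M → (Fin n → Fin n → Fin (k^2)) :=
    fun p a b => A (p.1 + (a : ℕ)) (p.2 + (b : ℕ)) with hφ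
  have hinj : Function.Injective φ := fun p q hpq =>
    h p q (fun a b => congrFun (congrFun hpq a) b)
  have hM : M ≠ 0 := by
    rintro rfl
    haveI := Finite.of_injective φ hinj
    exact not_finite (ZMod 0 × ZMod 0)
  haveI : NeZero M := ⟨hM⟩
  calc M * M = Fintype.card (ZMod M × ZMod M) := by simp [ZMod.card]
    _ ≤ Fintype.card (Fin n → Fin n → Fin (k^2)) := Fintype.card_le_of_injective φ hinj
    _ = (k^2)^(n*n) := by simp [Fintype.card_fun, pow_mul]

open ArithmeticFunction in
lemma moebius_lower (k n : ℕ) (hk : 2 ≤ k) (hn : 2 ≤ n) :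
    (k:ℝ)^(n^2) - n * (k:ℝ)^(n*(n/2)) ≤
    ∑ d ∈ n.divisors, ((moebius (n/d) : ℤ) : ℝ) * ((k:ℝ)^n)^d := by
  have hn0 : n ≠ 0 := by omega
  have hk0 : (0:ℝ) ≤ (k:ℝ) := by positivity
  have hmem : n ∈ n.divisors := Nat.mem_divisors_self n hn0
  rw [← Finset.add_sum_erase _ _ hmem, Nat.div_self (by omega), ← pow_mul, ← sq]
  simp only [moebius_apply_one, Int.cast_one, one_mul]
  have hcard : ((n.divisors.erase n).card : ℝ) ≤ n := by
    have h1 : n.divisors.erase n ⊆ Finset.Icc 1 n := by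
      intro d hd
      have hd' := Finset.mem_of_mem_erase hd
      rw [Nat.mem_divisors] at hd'
      exact Finset.mem_Icc.2 ⟨Nat.pos_of_mem_divisors (Finset.mem_of_mem_erase hd),
        Nat.le_of_dvd (by omega) hd'.1⟩
    have := Finset.card_le_card h1
    rw [Nat.card_Icc] at this
    exact_mod_cast le_trans this (by omega)
  have hterm : ∀ d ∈ n.divisors.erase n,
      -((k:ℝ)^(n*(n/2))) ≤ ((moebius (n/d) : ℤ) : ℝ) * ((k:ℝ)^n)^d := by
    intro d hd
    have hdn : d ≠ n := Finset.ne_of_mem_erase hd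
    have hdvd : d ∣ n := (Nat.mem_divisors.1 (Finset.mem_of_mem_erase hd)).1
    have hdle : d ≤ n/2 := by
      obtain ⟨m, hm⟩ := hdvd
      have hm2 : 2 ≤ m := by
        rcases m with _ | _ | m
        · omega
        · exact absurd hm (by omega)
        · omega
      have : 2 * d ≤ n := by nlinarith
      omega
    have hxd : ((k:ℝ)^n)^d ≤ (k:ℝ)^(n*(n/2)) := by
      rw [← pow_mul]
      exact pow_le_pow_right₀ (by exact_mod_cast one_le_two.trans (by exact_mod_cast hk)) (by nlinarith)
    have hmu : (-1 : ℝ) ≤ ((moebius (n/d) : ℤ) : ℝ) := by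
      have := @ArithmeticFunction.abs_moebius_le_one (n/d)
      have h2 : |((moebius (n/d) : ℤ) : ℝ)| ≤ 1 := by exact_mod_cast this
      linarith [abs_le.1 h2 |>.1]
    have hx0 : (0:ℝ) ≤ ((k:ℝ)^n)^d := by positivity
    calc -((k:ℝ)^(n*(n/2))) ≤ -(((k:ℝ)^n)^d) := by linarith
      _ = (-1) * ((k:ℝ)^n)^d := by ring
      _ ≤ ((moebius (n/d) : ℤ) : ℝ) * ((k:ℝ)^n)^d := by
          exact mul_le_mul_of_nonneg_right hmu hx0
  have hsum : -((n:ℝ) * (k:ℝ)^(n*(n/2))) ≤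
      ∑ d ∈ n.divisors.erase n, ((moebius (n/d) : ℤ) : ℝ) * ((k:ℝ)^n)^d := by
    calc -((n:ℝ) * (k:ℝ)^(n*(n/2)))
        ≤ -(((n.divisors.erase n).card : ℝ) * (k:ℝ)^(n*(n/2))) := by
          have : (0:ℝ) ≤ (k:ℝ)^(n*(n/2)) := by positivity
          nlinarith
      _ = ∑ _d ∈ n.divisors.erase n, -((k:ℝ)^(n*(n/2))) := by
          rw [Finset.sum_const, nsmul_eq_mul]; ring
      _ ≤ _ := Finset.sum_le_sum hterm
  linarith

theorem almostPerfect_family (k : ℕ) (hk : 2 ≤ k) (N : ℕ → ℕ)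
    (A : ∀ n : ℕ, ZMod (N n) → ZMod (N n) → Fin (k ^ 2))
    (hsub : ∀ n : ℕ, 2 ≤ n → IsSubPerfectMap (N n) (N n) n n (A n))
    (hlow : ∀ n : ℕ, 2 ≤ n →
      ((N n : ℝ)) ≥ (n : ℝ) * ((∑ d ∈ n.divisors,
          (ArithmeticFunction.moebius (n / d) : ℝ) * ((k : ℝ) ^ n) ^ d) / n
            - max 1 ((n : ℝ) - 3))) :
    Tendsto (fun n : ℕ => ((N n : ℝ)) ^ 2 / ((k : ℝ) ^ 2) ^ (n ^ 2)) atTop (nhds 1) := by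
  have hk1 : (1:ℝ) ≤ (k:ℝ) := by exact_mod_cast hk.trans' one_le_two
  have hk2 : (2:ℝ) ≤ (k:ℝ) := by exact_mod_cast hk
  set ε : ℕ → ℝ := fun n => (n:ℝ)^1 * (1/2:ℝ)^n + (n:ℝ)^2 * (1/2:ℝ)^n with hεdef
  have hε : Tendsto ε atTop (nhds 0) := by
    have h1 := tendsto_pow_const_mul_const_pow_of_abs_lt_one 1 (r := (1/2:ℝ)) (by rw [abs_lt]; norm_num)
    have h2 := tendsto_pow_const_mul_const_pow_of_abs_lt_one 2 (r := (1/2:ℝ)) (by rw [abs_lt]; norm_num)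
    simpa [hεdef, one_div, inv_pow] using h1.add h2
  have htends : Tendsto (fun n => (1 - ε n)^2) atTop (nhds 1) := by
    have := ((tendsto_const_nhds (x := (1:ℝ)) (f := atTop)).sub hε).pow 2
    simpa using this
  apply tendsto_of_tendsto_of_tendsto_of_le_of_le' htends tendsto_const_nhds
  · -- lower bound eventually
    filter_upwards [eventually_ge_atTop 2, hε.eventually (gt_mem_nhds one_pos)]
      with n hn hεlt
    have hP : (0:ℝ) < (k:ℝ)^(n^2) := by positivity
    have hQ : ((k:ℝ)^2)^(n^2) = ((k:ℝ)^(n^2))^2 := by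
      rw [← pow_mul, ← pow_mul, Nat.mul_comm]
    rw [hQ, ← div_pow]
    apply pow_le_pow_left₀ (by linarith)
    rw [le_div_iff₀ hP]
    -- key: (1 - ε n) * k^(n^2) ≤ N n
    have h2n : (2:ℝ)^n ≤ (k:ℝ)^(n^2) := by
      calc (2:ℝ)^n ≤ (k:ℝ)^n := pow_le_pow_left₀ (by norm_num) hk2 n
        _ ≤ (k:ℝ)^(n^2) := pow_le_pow_right₀ hk1 (Nat.le_self_pow two_ne_zero n)
    have h12 : ((1:ℝ)/2)^n * (2:ℝ)^n = 1 := by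
      rw [← mul_pow]; norm_num
    have h1 : (2:ℝ)^n * (k:ℝ)^(n*(n/2)) ≤ (k:ℝ)^(n^2) := by
      calc (2:ℝ)^n * (k:ℝ)^(n*(n/2)) ≤ (k:ℝ)^n * (k:ℝ)^(n*(n/2)) := by
            exact mul_le_mul_of_nonneg_right (pow_le_pow_left₀ (by norm_num) hk2 n)
              (by positivity)
        _ = (k:ℝ)^(n + n*(n/2)) := (pow_add _ _ _).symm
        _ ≤ (k:ℝ)^(n^2) := pow_le_pow_right₀ hk1 (by nlinarith [Nat.div_mul_le_self n 2])
    have hhalf : (0:ℝ) < ((1:ℝ)/2)^n := by positivity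
    have hA : (k:ℝ)^(n*(n/2)) ≤ ((1:ℝ)/2)^n * (k:ℝ)^(n^2) := by
      have := mul_le_mul_of_nonneg_left h1 hhalf.le
      calc (k:ℝ)^(n*(n/2)) = ((1:ℝ)/2)^n * ((2:ℝ)^n * (k:ℝ)^(n*(n/2))) := by
            rw [← mul_assoc, h12, one_mul]
        _ ≤ ((1:ℝ)/2)^n * (k:ℝ)^(n^2) := this
    have hB : (1:ℝ) ≤ ((1:ℝ)/2)^n * (k:ℝ)^(n^2) := by
      calc (1:ℝ) = ((1:ℝ)/2)^n * (2:ℝ)^n := h12.symm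
        _ ≤ _ := mul_le_mul_of_nonneg_left h2n hhalf.le
    -- lower bound on N n
    have hS := moebius_lower k n hk hn
    have hNlow := hlow n hn
    have hne : (n:ℝ) ≠ 0 := by positivity
    have hmax : max (1:ℝ) ((n:ℝ)-3) ≤ (n:ℝ) := by
      apply max_le
      · exact_mod_cast hn.trans' one_le_two
      · linarith
    set S := ∑ d ∈ n.divisors, ((ArithmeticFunction.moebius (n/d) : ℤ) : ℝ) * ((k:ℝ)^n)^d
      with hSdef
    have hrw : (n:ℝ) * (S / n - max 1 ((n:ℝ)-3)) = S - n * max 1 ((n:ℝ)-3) := by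
      field_simp
    rw [hrw] at hNlow
    have hN' : (k:ℝ)^(n^2) - (n:ℝ) * (k:ℝ)^(n*(n/2)) - (n:ℝ)*(n:ℝ) ≤ (N n : ℝ) := by
      have hmm : (n:ℝ) * max 1 ((n:ℝ)-3) ≤ (n:ℝ)*(n:ℝ) :=
        mul_le_mul_of_nonneg_left hmax (by positivity)
      linarith
    have hn0 : (0:ℝ) ≤ (n:ℝ) := by positivity
    have hAn := mul_le_mul_of_nonneg_left hA hn0
    have hBn := mul_le_mul_of_nonneg_left hB (mul_nonneg hn0 hn0)
    have hexp : (1 - ε n) * (k:ℝ)^(n^2)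
        = (k:ℝ)^(n^2) - (n:ℝ) * (((1:ℝ)/2)^n * (k:ℝ)^(n^2))
          - (n:ℝ)*(n:ℝ) * (((1:ℝ)/2)^n * (k:ℝ)^(n^2)) := by
      simp only [hεdef]; ring
    rw [hexp]
    linarith
  · -- upper bound eventually
    filter_upwards [eventually_ge_atTop 2] with n hn
    have hpos : (0:ℝ) < ((k:ℝ)^2)^(n^2) := by positivity
    rw [div_le_one hpos]
    have hcard := upper_aux k (A n) (hsub n hn)
    calc ((N n : ℝ))^2 = ((N n * N n : ℕ) : ℝ) := by push_cast; ring
      _ ≤ (((k^2)^(n*n) : ℕ) : ℝ) := by exact_mod_cast hcard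
      _ = ((k:ℝ)^2)^(n^2) := by push_cast [pow_two n]; ring
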